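/- Let v : 2^N → ℝ≥0 be a monotone function satisfying the gross substitutes condition (in the M♯-exchange formulation). Then for any price vector p ∈ ℝ^N, the function f(T) = max_{S ⊆ T} (v(S) - Σ_{i∈S} p_i) is submodular on 2^N. -/

import Mathlib

/-- If a monotone nonnegative valuation `v` satisfies the gross substitutes
condition (M♯-exchange form), then for any price vector `p`, the indirect
utility `f T = max_{S ⊆ T} (v S - Σ_{i∈S} p i)` is submodular. -/
theorem stmt1 {ι : Type*} [DecidableEq ι] [Fintype ι]
    (v : Finset ι → ℝ)
    (hmono : ∀ S T : Finset ι, S ⊆ T → v S ≤ v T)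
    (hnn : ∀ S : Finset ι, 0 ≤ v S)
    (hGS : ∀ S T : Finset ι, ∀ x ∈ S,
      v S + v T ≤ v (S.erase x) + v (insert x T) ∨
      ∃ y ∈ T, v S + v T ≤ v (insert y (S.erase x)) + v (insert x (T.erase y)))
    (p : ι → ℝ)
    (f : Finset ι → ℝ)
    (hf : ∀ T : Finset ι,
      f T = T.powerset.sup' (Finset.powerset_nonempty T)
        (fun S => v S - ∑ i ∈ S, p i)) :
    ∀ (T : Finset ι) (i j : ι), i ∉ T → j ∉ T → i ≠ j →
      f (insert i (insert j T)) + f T ≤ f (insert i T) + f (insert j T) := by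
  intro T i j hi hj hij
  obtain ⟨A, hA, hAval⟩ := Finset.exists_mem_eq_sup'
    (Finset.powerset_nonempty (insert i (insert j T)))
    (fun S => v S - ∑ k ∈ S, p k)
  obtain ⟨B, hB, hBval⟩ := Finset.exists_mem_eq_sup'
    (Finset.powerset_nonempty T) (fun S => v S - ∑ k ∈ S, p k)
  rw [Finset.mem_powerset] at hA hB
  have hiB : i ∉ B := fun h => hi (hB h)
  have hle1 : ∀ S : Finset ι, S ⊆ insert i T →
      v S - ∑ k ∈ S, p k ≤ f (insert i T) := by
    intro S hS
    rw [hf]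
    exact Finset.le_sup' (fun S => v S - ∑ k ∈ S, p k) (Finset.mem_powerset.mpr hS)
  have hle2 : ∀ S : Finset ι, S ⊆ insert j T →
      v S - ∑ k ∈ S, p k ≤ f (insert j T) := by
    intro S hS
    rw [hf]
    exact Finset.le_sup' (fun S => v S - ∑ k ∈ S, p k) (Finset.mem_powerset.mpr hS)
  have hfA : f (insert i (insert j T)) = v A - ∑ k ∈ A, p k := by
    rw [hf]; exact hAval
  have hfB : f T = v B - ∑ k ∈ B, p k := by
    rw [hf]; exact hBval
  rw [hfA, hfB]
  by_cases hiA : i ∈ A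
  · have hsub1 : A.erase i ⊆ insert j T := by
      intro x hx
      rcases Finset.mem_erase.mp hx with ⟨hxi, hxA⟩
      rcases Finset.mem_insert.mp (hA hxA) with h | h
      · exact absurd h hxi
      · exact h
    have e1 : ∑ k ∈ A.erase i, p k = ∑ k ∈ A, p k - p i :=
      Finset.sum_erase_eq_sub hiA
    have e2 : ∑ k ∈ insert i B, p k = p i + ∑ k ∈ B, p k :=
      Finset.sum_insert hiB
    have hBi : insert i B ⊆ insert i T := Finset.insert_subset_insert _ hB
    rcases hGS A B i hiA with h | ⟨y, hyB, h⟩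
    · linarith [hle1 _ hBi, hle2 _ hsub1]
    · have hyT : y ∈ T := hB hyB
      have hyi : y ≠ i := fun h' => hiB (h' ▸ hyB)
      by_cases hyA : y ∈ A
      · have heq : insert y (A.erase i) = A.erase i :=
          Finset.insert_eq_self.mpr (Finset.mem_erase.mpr ⟨hyi, hyA⟩)
        have hmon : v (insert i (B.erase y)) ≤ v (insert i B) :=
          hmono _ _ (Finset.insert_subset_insert _ (Finset.erase_subset _ _))
        rw [heq] at h
        linarith [hle1 _ hBi, hle2 _ hsub1]
      · have hS1 : insert y (A.erase i) ⊆ insert j T :=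
          Finset.insert_subset (Finset.mem_insert_of_mem hyT) hsub1
        have hS2 : insert i (B.erase y) ⊆ insert i T :=
          Finset.insert_subset (Finset.mem_insert_self _ _)
            (fun x hx => Finset.mem_insert_of_mem (hB (Finset.erase_subset _ _ hx)))
        have hyAe : y ∉ A.erase i := fun hx => hyA (Finset.mem_of_mem_erase hx)
        have hiBe : i ∉ B.erase y := fun hx => hiB (Finset.mem_of_mem_erase hx)
        have e3 : ∑ k ∈ insert y (A.erase i), p k = p y + ∑ k ∈ A.erase i, p k :=
          Finset.sum_insert hyAe
        have e4 : ∑ k ∈ insert i (B.erase y), p k = p i + ∑ k ∈ B.erase y, p k :=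
          Finset.sum_insert hiBe
        have e5 : ∑ k ∈ B.erase y, p k = ∑ k ∈ B, p k - p y :=
          Finset.sum_erase_eq_sub hyB
        linarith [hle1 _ hS2, hle2 _ hS1]
  · have hAsub : A ⊆ insert j T := by
      intro x hx
      rcases Finset.mem_insert.mp (hA hx) with rfl | h
      · exact absurd hx hiA
      · exact h
    have hBsub : B ⊆ insert i T := fun x hx => Finset.mem_insert_of_mem (hB hx)
    linarith [hle1 _ hBsub, hle2 _ hAsub]
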